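/- arXiv:0711.2134 — 2 statements merged into one kernel-verified Lean document; each statement's English description precedes it below -/
import Mathlib

section
/- Uniform ℓ² bound for Toda solutions: Let v₁ be a solution of the Toda lattice with v₁(0) = v₀ ∈ ℓ²(ℤ;ℝ²). Then sup_{t∈ℝ} ‖v₁(t)‖_{ℓ²} ≤ C‖v₀‖_{ℓ²}, where the constant C can be chosen as a nondecreasing function of ‖v₀‖_{ℓ²}; i.e., for every R > 0 there exists C(R) > 0 such that ‖v₀‖_{ℓ²} ≤ R implies sup_{t∈ℝ} ‖v₁(t)‖_{ℓ²} ≤ C(R)‖v₀‖_{ℓ²}. -/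
open Real Filter Set MeasureTheory

namespace TodaPaper

noncomputable section

/-- The squared Euclidean norm on `ℝ × ℝ`. -/
def nsq (w : ℝ × ℝ) : ℝ := w.1 ^ 2 + w.2 ^ 2

/-- Membership in `ℓ²(ℤ; ℝ²)`. -/
def Meml2 (u : ℤ → ℝ × ℝ) : Prop := Summable fun n : ℤ => nsq (u n)

/-- The `ℓ²(ℤ; ℝ²)` norm. -/
def l2norm (u : ℤ → ℝ × ℝ) : ℝ := Real.sqrt (∑' n : ℤ, nsq (u n))

/-- Membership in the exponentially weighted space `ℓ²_a`. -/
def Meml2w (a : ℝ) (u : ℤ → ℝ × ℝ) : Prop :=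
  Summable fun n : ℤ => Real.exp (2 * a * n) * nsq (u n)

/-- The `ℓ²_a` norm. -/
def wnorm (a : ℝ) (u : ℤ → ℝ × ℝ) : ℝ :=
  Real.sqrt (∑' n : ℤ, Real.exp (2 * a * n) * nsq (u n))

/-- The Toda potential `V(r) = e^{-r} - 1 + r`. -/
def V (r : ℝ) : ℝ := Real.exp (-r) - 1 + r

/-- Derivative of the Toda potential, `V'(r) = 1 - e^{-r}`. -/
def V' (r : ℝ) : ℝ := 1 - Real.exp (-r)

/-- `u = (r, p)` is a solution of the Toda lattice. -/
structure IsTodaSolution (u : ℝ → ℤ → ℝ × ℝ) : Prop where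
  mem : ∀ t, Meml2 (u t)
  dr : ∀ t n, HasDerivAt (fun s => (u s n).1) ((u t (n + 1)).2 - (u t n).2) t
  dp : ∀ t n, HasDerivAt (fun s => (u s n).2) (V' (u t n).1 - V' (u t (n - 1)).1) t

/-- The decay rate `κ(c)`, the (unique, for `c > 1`) positive root of `sinh κ = c κ`. -/
def kappa (c : ℝ) : ℝ := Classical.epsilon fun k : ℝ => 0 < k ∧ Real.sinh k = c * k

/-- The soliton displacement profile `q̃_c`. -/
def qt (c x : ℝ) : ℝ := Real.log (Real.cosh (kappa c * (x - 1)) / Real.cosh (kappa c * x))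

/-- The soliton momentum profile `p̃_c = -c q̃_c'`. -/
def ptil (c : ℝ) : ℝ → ℝ := fun x => -c * deriv (qt c) x

/-- The soliton relative-displacement profile `r̃_c(x) = q̃_c(x+1) - q̃_c(x)`. -/
def rtil (c : ℝ) : ℝ → ℝ := fun x => qt c (x + 1) - qt c x

/-- The soliton profile `ũ_c = (r̃_c, p̃_c)`. -/
def solProfile (c : ℝ) (x : ℝ) : ℝ × ℝ := (rtil c x, ptil c x)

/-- The soliton `u_c(γ)(n) = ũ_c(n - cγ)`. -/
def uc (c γ : ℝ) : ℤ → ℝ × ℝ := fun n => solProfile c ((n : ℝ) - c * γ)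

/-- The neutral mode `u̇_c(γ)(n) = -c ũ_c'(n - cγ)`. -/
def ucDot (c γ : ℝ) : ℤ → ℝ × ℝ := fun n => (-c) • deriv (solProfile c) ((n : ℝ) - c * γ)

/-- The neutral mode `∂_c u_c(γ)(n)`. -/
def ucDc (c γ : ℝ) : ℤ → ℝ × ℝ := fun n => deriv (fun c' => solProfile c' ((n : ℝ) - c' * γ)) c

/-- The `ℓ²` pairing `⟨u, v⟩ = Σ_n (u₁ v₁ + u₂ v₂)`. -/
def pairing (u v : ℤ → ℝ × ℝ) : ℝ := ∑' n : ℤ, ((u n).1 * (v n).1 + (u n).2 * (v n).2)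

/-- The operator `J⁻¹ : (r,p) ↦ (Σ_{k=0}^∞ p(·-k), Σ_{k=1}^∞ r(·-k))`. -/
def Jinv (u : ℤ → ℝ × ℝ) : ℤ → ℝ × ℝ := fun n =>
  (∑' k : ℕ, (u (n - (k : ℤ))).2, ∑' k : ℕ, (u (n - 1 - (k : ℤ))).1)

lemma hasDerivAt_V (r : ℝ) : HasDerivAt V (V' r) r := by
  have h1 : HasDerivAt (fun r : ℝ => Real.exp (-r)) (-Real.exp (-r)) r := by
    simpa [Function.comp_def] using (Real.hasDerivAt_exp (-r)).comp r ((hasDerivAt_id r).neg)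
  have := ((h1.sub_const 1).add (hasDerivAt_id r))
  unfold V; simpa [V', Pi.add_def] using this.congr_deriv (by ring)

lemma V_nonneg (r : ℝ) : 0 ≤ V r := by
  have := Real.add_one_le_exp (-r)
  simp only [V]; linarith

lemma exp_sub_one_le (y : ℝ) : Real.exp y - 1 ≤ y * Real.exp y := by
  have h := Real.add_one_le_exp (-y)
  have he : Real.exp (-y) * Real.exp y = 1 := by rw [← Real.exp_add]; simp
  nlinarith [Real.exp_pos y]

lemma V_lower_neg {r : ℝ} (hr : r ≤ 0) : r ^ 2 / 4 ≤ V r := by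
  have h0 : (0:ℝ) ≤ 1 + (-r)/2 := by linarith
  have h1 : 1 + (-r)/2 ≤ Real.exp ((-r)/2) := by
    have := Real.add_one_le_exp ((-r)/2); linarith
  have h2 : (1 + (-r)/2)^2 ≤ Real.exp ((-r)/2) ^ 2 := pow_le_pow_left₀ h0 h1 2
  have h3 : Real.exp ((-r)/2) ^ 2 = Real.exp (-r) := by
    rw [sq, ← Real.exp_add]; ring_nf
  simp only [V]; nlinarith

lemma exp_upper {x : ℝ} (hx : 0 ≤ x) : Real.exp x - 1 - x ≤ x ^ 2 * Real.exp x / 2 := by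
  set φ' : ℝ → ℝ := fun x => x * Real.exp x + x ^ 2 * Real.exp x / 2 - Real.exp x + 1 with hφ'
  have hd : ∀ y : ℝ, HasDerivAt (fun x => x ^ 2 * Real.exp x / 2 - Real.exp x + 1 + x) (φ' y) y := by
    intro y
    have h1 : HasDerivAt (fun x : ℝ => x ^ 2 * Real.exp x) (2 * y * Real.exp y + y ^ 2 * Real.exp y) y := by
      simpa [Pi.mul_def] using (hasDerivAt_pow 2 y).mul (Real.hasDerivAt_exp y)
    have := (((h1.div_const 2).sub (Real.hasDerivAt_exp y)).add_const 1).add (hasDerivAt_id y)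
    exact this.congr_deriv (by simp [hφ']; ring)
  have hd' : ∀ y : ℝ, 0 ≤ y → 0 ≤ φ' y := by
    intro y hy
    have h3 := exp_sub_one_le y
    simp only [hφ']
    nlinarith [Real.exp_pos y, sq_nonneg y]
  have hmono : MonotoneOn (fun x => x ^ 2 * Real.exp x / 2 - Real.exp x + 1 + x) (Ici (0:ℝ)) := by
    apply monotoneOn_of_hasDerivWithinAt_nonneg (convex_Ici 0) (f' := φ')
    · exact fun y _ => ((hd y).continuousAt.continuousWithinAt)
    · intro y hy; exact (hd y).hasDerivWithinAt
    · intro y hy; exact hd' y (le_of_lt (by simpa using hy))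
  have := hmono (self_mem_Ici) (mem_Ici.mpr hx) hx
  simp at this; linarith

lemma V_le_of_nonneg {r : ℝ} (hr : 0 ≤ r) : V r ≤ r ^ 2 / 2 := by
  have hmono : Monotone (fun r : ℝ => r ^ 2 / 2 - V r) := by
    apply monotone_of_hasDerivAt_nonneg (f' := fun r => r - V' r)
    · intro x
      exact (((hasDerivAt_pow 2 x).div_const 2).sub (hasDerivAt_V x)).congr_deriv (by ring)
    · intro x
      have := Real.add_one_le_exp (-x)
      simp only [V']; dsimp; linarith
  have := hmono hr
  simp only [V] at this ⊢; norm_num at this; linarith [this]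

lemma V_le (r : ℝ) : V r ≤ Real.exp |r| * r ^ 2 / 2 := by
  rcases le_or_gt 0 r with h | h
  · have h2 := V_le_of_nonneg h
    have h3 : (1:ℝ) ≤ Real.exp |r| := Real.one_le_exp (abs_nonneg r)
    nlinarith [sq_nonneg r]
  · have hx : 0 ≤ -r := by linarith
    have h4 := exp_upper hx
    have habs : |r| = -r := abs_of_neg h
    simp only [V, habs]
    nlinarith [h4]

lemma V_lower_pos {r m : ℝ} (h0 : 0 ≤ r) (hm : r ≤ m) : Real.exp (-m) * r ^ 2 / 2 ≤ V r := by
  set ψ' : ℝ → ℝ := fun x => V' x - Real.exp (-m) * x with hψ'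
  have hd : ∀ y : ℝ, HasDerivAt (fun x => V x - Real.exp (-m) * x ^ 2 / 2) (ψ' y) y := by
    intro y
    have h2 : HasDerivAt (fun x : ℝ => Real.exp (-m) * x ^ 2 / 2) (Real.exp (-m) * y) y := by
      exact (((hasDerivAt_pow 2 y).const_mul (Real.exp (-m))).div_const 2).congr_deriv (by ring)
    exact ((hasDerivAt_V y).sub h2).congr_deriv (by simp [hψ'])
  have hmono : MonotoneOn (fun x => V x - Real.exp (-m) * x ^ 2 / 2) (Icc (0:ℝ) m) := by
    apply monotoneOn_of_hasDerivWithinAt_nonneg (convex_Icc 0 m) (f' := ψ')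
    · exact fun y _ => (hd y).continuousAt.continuousWithinAt
    · intro y hy; exact (hd y).hasDerivWithinAt
    · intro y hy
      rw [interior_Icc] at hy
      obtain ⟨hy0, hym⟩ := hy
      have h1 : y * Real.exp (-y) ≤ 1 - Real.exp (-y) := by
        have he : Real.exp (-y) * Real.exp y = 1 := by rw [← Real.exp_add]; simp
        nlinarith [mul_nonneg (sub_nonneg.mpr (Real.add_one_le_exp y)) (Real.exp_pos (-y)).le, he]
      have h2 : Real.exp (-m) * y ≤ Real.exp (-y) * y :=
        mul_le_mul_of_nonneg_right (Real.exp_le_exp.mpr (by linarith)) (le_of_lt hy0)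
      simp only [hψ', V']; linarith [h1, h2, mul_comm y (Real.exp (-y))]
  have hmem0 : (0:ℝ) ∈ Icc (0:ℝ) m := ⟨le_refl _, le_trans h0 hm⟩
  have h5 := hmono hmem0 ⟨h0, hm⟩ h0
  simp only [V] at h5 ⊢
  norm_num at h5; linarith

lemma V'_abs_le (r : ℝ) : |V' r| ≤ |r| * Real.exp |r| := by
  rcases le_or_gt 0 r with h | h
  · have habs : |r| = r := abs_of_nonneg h
    have h1 : V' r ≤ r := by
      have := Real.add_one_le_exp (-r); simp only [V']; linarith
    have h2 : 0 ≤ V' r := by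
      have : Real.exp (-r) ≤ 1 := Real.exp_le_one_iff.mpr (by linarith)
      simp only [V']; linarith
    rw [habs, abs_of_nonneg h2]
    have h3 : (1:ℝ) ≤ Real.exp r := Real.one_le_exp h
    nlinarith
  · have habs : |r| = -r := abs_of_neg h
    have h2 : V' r ≤ 0 := by
      have : (1:ℝ) ≤ Real.exp (-r) := Real.one_le_exp (by linarith)
      simp only [V']; linarith
    rw [habs, abs_of_nonpos h2]
    have h3 := exp_sub_one_le (-r)
    simp only [V']
    linarith

lemma V_coercive {r h : ℝ} (hh : 0 ≤ h) (hV : V r ≤ h) : |r| ≤ h + 1 + 2 * Real.sqrt h := by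
  rcases le_or_gt 0 r with hr | hr
  · rw [abs_of_nonneg hr]
    have h1 : r - 1 ≤ V r := by
      have := Real.exp_pos (-r); simp only [V]; linarith
    have := Real.sqrt_nonneg h
    linarith
  · rw [abs_of_neg hr]
    have h1 : r ^ 2 / 4 ≤ h := le_trans (V_lower_neg (le_of_lt hr)) hV
    have hs := Real.sq_sqrt hh
    have hs0 := Real.sqrt_nonneg h
    nlinarith

lemma rsq_le_V {r m : ℝ} (hm : |r| ≤ m) : r ^ 2 ≤ 4 * Real.exp m * V r := by
  have hm0 : 0 ≤ m := le_trans (abs_nonneg r) hm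
  have he1 : (1:ℝ) ≤ Real.exp m := Real.one_le_exp hm0
  rcases le_or_gt 0 r with h | h
  · have := V_lower_pos h (le_trans (le_abs_self r) hm)
    have he : Real.exp (-m) * Real.exp m = 1 := by rw [← Real.exp_add]; simp
    nlinarith [Real.exp_pos m, Real.exp_pos (-m), V_nonneg r]
  · have := V_lower_neg (le_of_lt h)
    nlinarith [V_nonneg r]

/-- local energy density -/
def en (w : ℝ × ℝ) : ℝ := V w.1 + w.2 ^ 2 / 2

def rho (h : ℝ) : ℝ := h + 1 + 2 * Real.sqrt h

lemma nsq_nonneg (w : ℝ × ℝ) : 0 ≤ nsq w := by simp only [nsq]; positivity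

lemma en_nonneg (w : ℝ × ℝ) : 0 ≤ en w := by
  have h1 := V_nonneg w.1
  have h2 : (0:ℝ) ≤ w.2 ^ 2 / 2 := by positivity
  simp only [en]; linarith

lemma rho_nonneg {h : ℝ} (hh : 0 ≤ h) : 0 ≤ rho h := by
  have := Real.sqrt_nonneg h; simp only [rho]; linarith

lemma rho_mono {h h' : ℝ} (h0 : 0 ≤ h) (hle : h ≤ h') : rho h ≤ rho h' := by
  have := Real.sqrt_le_sqrt hle
  simp only [rho]; linarith

variable {u : ℤ → ℝ × ℝ}

lemma coord1_sq_le (hu : Summable fun n => nsq (u n)) (n : ℤ) :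
    (u n).1 ^ 2 ≤ ∑' n, nsq (u n) := by
  have h1 : nsq (u n) ≤ ∑' n, nsq (u n) := Summable.le_tsum hu n (fun m _ => nsq_nonneg _)
  have : (u n).2 ^ 2 ≥ 0 := by positivity
  simp only [nsq] at h1 ⊢; linarith

lemma coord2_sq_le (hu : Summable fun n => nsq (u n)) (n : ℤ) :
    (u n).2 ^ 2 ≤ ∑' n, nsq (u n) := by
  have h1 : nsq (u n) ≤ ∑' n, nsq (u n) := Summable.le_tsum hu n (fun m _ => nsq_nonneg _)
  have : (u n).1 ^ 2 ≥ 0 := by positivity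
  simp only [nsq] at h1 ⊢; linarith

lemma abs_coord1_le (hu : Summable fun n => nsq (u n)) (n : ℤ) :
    |(u n).1| ≤ Real.sqrt (∑' n, nsq (u n)) := by
  rw [← Real.sqrt_sq_eq_abs]
  exact Real.sqrt_le_sqrt (coord1_sq_le hu n)

lemma abs_coord2_le (hu : Summable fun n => nsq (u n)) (n : ℤ) :
    |(u n).2| ≤ Real.sqrt (∑' n, nsq (u n)) := by
  rw [← Real.sqrt_sq_eq_abs]
  exact Real.sqrt_le_sqrt (coord2_sq_le hu n)

lemma en_le_nsq (hu : Summable fun n => nsq (u n)) (n : ℤ) :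
    en (u n) ≤ Real.exp (Real.sqrt (∑' n, nsq (u n))) * nsq (u n) := by
  set b := Real.sqrt (∑' n, nsq (u n)) with hb
  have hb0 : 0 ≤ b := Real.sqrt_nonneg _
  have h1 : V (u n).1 ≤ Real.exp |(u n).1| * (u n).1 ^ 2 / 2 := V_le _
  have h2 : Real.exp |(u n).1| ≤ Real.exp b := Real.exp_le_exp.mpr (abs_coord1_le hu n)
  have h3 : (1:ℝ) ≤ Real.exp b := Real.one_le_exp hb0
  simp only [en, nsq]
  nlinarith [sq_nonneg (u n).1, sq_nonneg (u n).2, Real.exp_pos b]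

lemma summable_en (hu : Summable fun n => nsq (u n)) : Summable fun n => en (u n) :=
  Summable.of_nonneg_of_le (fun n => en_nonneg _) (en_le_nsq hu) (hu.mul_left _)

lemma energy_le (hu : Summable fun n => nsq (u n)) :
    (∑' n, en (u n)) ≤ Real.exp (Real.sqrt (∑' n, nsq (u n))) * ∑' n, nsq (u n) := by
  calc (∑' n, en (u n)) ≤ ∑' n, Real.exp (Real.sqrt (∑' n, nsq (u n))) * nsq (u n) :=
        Summable.tsum_le_tsum (en_le_nsq hu) (summable_en hu) (hu.mul_left _)
    _ = _ := tsum_mul_left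

lemma Q_le_of_energy_le (hu : Summable fun n => nsq (u n)) {h : ℝ} (hh : 0 ≤ h)
    (hE : (∑' n, en (u n)) ≤ h) :
    (∑' n, nsq (u n)) ≤ (2 + 4 * Real.exp (rho h)) * ∑' n, en (u n) := by
  set E := ∑' n, en (u n) with hEdef
  have hsum_en := summable_en hu
  have hE0 : 0 ≤ E := tsum_nonneg (fun n => en_nonneg _)
  have hVle : ∀ n, V (u n).1 ≤ E := by
    intro n
    have h1 : en (u n) ≤ E := Summable.le_tsum hsum_en n (fun m _ => en_nonneg _)
    have : 0 ≤ (u n).2 ^ 2 / 2 := by positivity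
    simp only [en] at h1; linarith
  have hr : ∀ n, |(u n).1| ≤ rho h := fun n => V_coercive hh (le_trans (hVle n) hE)
  have hrsq : ∀ n, (u n).1 ^ 2 ≤ 4 * Real.exp (rho h) * V (u n).1 :=
    fun n => rsq_le_V (hr n)
  have hsumV : Summable fun n => V (u n).1 := by
    apply Summable.of_nonneg_of_le (fun n => V_nonneg _) _ hsum_en
    intro n; have : 0 ≤ (u n).2 ^ 2 / 2 := by positivity
    simp only [en]; linarith
  have hsum1 : Summable fun n => (u n).1 ^ 2 := by
    apply Summable.of_nonneg_of_le (fun n => sq_nonneg _) _ hu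
    intro n; have : 0 ≤ (u n).2 ^ 2 := sq_nonneg _
    simp only [nsq]; linarith
  have hsum2 : Summable fun n => (u n).2 ^ 2 := by
    apply Summable.of_nonneg_of_le (fun n => sq_nonneg _) _ hu
    intro n; have : 0 ≤ (u n).1 ^ 2 := sq_nonneg _
    simp only [nsq]; linarith
  have hsplit : (∑' n, nsq (u n)) = (∑' n, (u n).1 ^ 2) + ∑' n, (u n).2 ^ 2 := by
    simp only [nsq]; exact Summable.tsum_add hsum1 hsum2
  have h1 : (∑' n, (u n).1 ^ 2) ≤ 4 * Real.exp (rho h) * E := by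
    calc (∑' n, (u n).1 ^ 2) ≤ ∑' n, 4 * Real.exp (rho h) * V (u n).1 :=
          Summable.tsum_le_tsum hrsq hsum1 (hsumV.mul_left _)
      _ = 4 * Real.exp (rho h) * ∑' n, V (u n).1 := tsum_mul_left
      _ ≤ 4 * Real.exp (rho h) * E := by
          have hVE : (∑' n, V (u n).1) ≤ E := by
            apply Summable.tsum_le_tsum _ hsumV hsum_en
            intro n; have : 0 ≤ (u n).2 ^ 2 / 2 := by positivity
            simp only [en]; linarith
          have : (0:ℝ) < Real.exp (rho h) := Real.exp_pos _
          nlinarith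
  have h2 : (∑' n, (u n).2 ^ 2) ≤ 2 * E := by
    have hp : ∀ n, (u n).2 ^ 2 ≤ 2 * en (u n) := by
      intro n; have := V_nonneg (u n).1; simp only [en]; linarith
    calc (∑' n, (u n).2 ^ 2) ≤ ∑' n, 2 * en (u n) := Summable.tsum_le_tsum hp hsum2 (hsum_en.mul_left _)
      _ = 2 * E := tsum_mul_left
  linarith


lemma tele (f : ℤ → ℝ) (N : ℕ) :
    ∑ n ∈ Finset.Icc (-(N:ℤ)) (N:ℤ), (f n - f (n - 1)) = f (N:ℤ) - f (-(N:ℤ) - 1) := by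
  induction N with
  | zero => simp
  | succ N ih =>
    have hset : Finset.Icc (-((N+1:ℕ)):ℤ) ((N+1:ℕ):ℤ)
        = insert (-(N:ℤ)-1) (insert ((N:ℤ)+1) (Finset.Icc (-(N:ℤ)) (N:ℤ))) := by
      ext x; simp only [Finset.mem_Icc, Finset.mem_insert]; push_cast; omega
    have h1 : (-(N:ℤ)-1) ∉ insert ((N:ℤ)+1) (Finset.Icc (-(N:ℤ)) (N:ℤ)) := by
      simp only [Finset.mem_Icc, Finset.mem_insert]; push_cast; omega
    have h2 : ((N:ℤ)+1) ∉ Finset.Icc (-(N:ℤ)) (N:ℤ) := by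
      simp only [Finset.mem_Icc]; omega
    rw [hset, Finset.sum_insert h1, Finset.sum_insert h2, ih]
    have e1 : ((N+1:ℕ):ℤ) = (N:ℤ)+1 := by push_cast; ring
    have e2 : (-(N:ℤ)-1) - 1 = -((N+1:ℕ):ℤ) - 1 := by push_cast; ring
    have e3 : ((N:ℤ)+1) - 1 = (N:ℤ) := by ring
    rw [e3, ← e2, e1]; ring

variable {v₁ : ℝ → ℤ → ℝ × ℝ}

lemma cont_coord1 (sol : IsTodaSolution v₁) (n : ℤ) : Continuous (fun s => (v₁ s n).1) :=
  continuous_iff_continuousAt.mpr fun s => (sol.dr s n).continuousAt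

lemma cont_coord2 (sol : IsTodaSolution v₁) (n : ℤ) : Continuous (fun s => (v₁ s n).2) :=
  continuous_iff_continuousAt.mpr fun s => (sol.dp s n).continuousAt

lemma continuous_V' : Continuous V' :=
  continuous_const.sub (Real.continuous_exp.comp continuous_neg)

lemma hasDerivAt_en_term (sol : IsTodaSolution v₁) (t : ℝ) (n : ℤ) :
    HasDerivAt (fun s => en (v₁ s n))
      (V' (v₁ t n).1 * (v₁ t (n+1)).2 - V' (v₁ t (n-1)).1 * (v₁ t ((n-1)+1)).2) t := by
  have h1 : HasDerivAt (fun s => V ((v₁ s n).1))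
      (V' ((v₁ t n).1) * ((v₁ t (n+1)).2 - (v₁ t n).2)) t :=
    (hasDerivAt_V _).comp t (sol.dr t n)
  have h2 : HasDerivAt (fun s => ((v₁ s n).2) ^ 2 / 2)
      ((v₁ t n).2 * (V' (v₁ t n).1 - V' (v₁ t (n-1)).1)) t := by
    exact (((sol.dp t n).pow 2).div_const 2).congr_deriv (by ring)
  have h3 := (h1.add h2)
  have e : ((n:ℤ)-1)+1 = n := by ring
  rw [e]
  simp only [en]
  exact h3.congr_deriv (by ring)

variable {v₁ : ℝ → ℤ → ℝ × ℝ}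

/-- partial sums of the energy tend to the total energy -/
lemma HN_tendsto (sol : IsTodaSolution v₁) (x : ℝ) :
    Tendsto (fun N : ℕ => ∑ n ∈ Finset.Icc (-(N:ℤ)) (N:ℤ), en (v₁ x n)) atTop
      (nhds (∑' n, en (v₁ x n))) := by
  have hfin : Tendsto (fun N : ℕ => Finset.Icc (-(N:ℤ)) (N:ℤ)) atTop atTop := by
    apply tendsto_atTop_finset_of_monotone
    · intro i j hij
      apply Finset.Icc_subset_Icc <;> omega
    · intro x
      exact ⟨x.natAbs, by simp only [Finset.mem_Icc]; omega⟩
  exact ((summable_en (sol.mem x)).hasSum.comp hfin)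

/-- coordinates tend to zero along cofinite -/
lemma coord_tendsto_zero (sol : IsTodaSolution v₁) (s : ℝ) :
    Tendsto (fun n : ℤ => (v₁ s n).1) cofinite (nhds 0) ∧
      Tendsto (fun n : ℤ => (v₁ s n).2) cofinite (nhds 0) := by
  have h := (sol.mem s).tendsto_cofinite_zero
  have hsq : Tendsto (fun n : ℤ => Real.sqrt (nsq (v₁ s n))) cofinite (nhds 0) := by
    have := (Real.continuous_sqrt.tendsto 0).comp h
    simpa [Function.comp_def] using this
  constructor
  · apply squeeze_zero_norm _ hsq
    intro n
    rw [Real.norm_eq_abs, ← Real.sqrt_sq_eq_abs]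
    apply Real.sqrt_le_sqrt
    have := sq_nonneg (v₁ s n).2; simp only [nsq]; linarith
  · apply squeeze_zero_norm _ hsq
    intro n
    rw [Real.norm_eq_abs, ← Real.sqrt_sq_eq_abs]
    apply Real.sqrt_le_sqrt
    have := sq_nonneg (v₁ s n).1; simp only [nsq]; linarith

lemma index_tendsto_atTop (c : ℤ) : Tendsto (fun N : ℕ => (N:ℤ) + c) atTop (cofinite : Filter ℤ) := by
  have h : Tendsto (fun N : ℕ => (N:ℤ) + c) atTop atTop :=
    tendsto_atTop_add_const_right _ c tendsto_natCast_atTop_atTop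
  exact h.mono_right (by rw [Int.cofinite_eq]; exact le_sup_right)

lemma index_tendsto_atBot (c : ℤ) : Tendsto (fun N : ℕ => -(N:ℤ) + c) atTop (cofinite : Filter ℤ) := by
  have h : Tendsto (fun N : ℕ => -(N:ℤ) + c) atTop atBot :=
    tendsto_atBot_add_const_right _ c (tendsto_neg_atTop_atBot.comp tendsto_natCast_atTop_atTop)
  exact h.mono_right (by rw [Int.cofinite_eq]; exact le_sup_left)

/-- the boundary term tends to zero -/
lemma bd_tendsto_zero (sol : IsTodaSolution v₁) (s : ℝ) :
    Tendsto (fun N : ℕ =>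
      V' (v₁ s (N:ℤ)).1 * (v₁ s ((N:ℤ)+1)).2
        - V' (v₁ s (-(N:ℤ)-1)).1 * (v₁ s ((-(N:ℤ)-1)+1)).2) atTop (nhds 0) := by
  obtain ⟨hr, hp⟩ := coord_tendsto_zero sol s
  have hV' : Tendsto (fun n : ℤ => V' (v₁ s n).1) cofinite (nhds 0) := by
    have := (continuous_V'.tendsto 0).comp hr
    simpa [V', Function.comp_def] using this
  have t1 : Tendsto (fun N : ℕ => V' (v₁ s (N:ℤ)).1) atTop (nhds 0) :=
    (hV'.comp (index_tendsto_atTop 0)).congr (fun N => by norm_num)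
  have t2 : Tendsto (fun N : ℕ => (v₁ s ((N:ℤ)+1)).2) atTop (nhds 0) :=
    (hp.comp (index_tendsto_atTop 1)).congr (fun N => by norm_num)
  have t3 : Tendsto (fun N : ℕ => V' (v₁ s (-(N:ℤ)-1)).1) atTop (nhds 0) :=
    (hV'.comp (index_tendsto_atBot (-1))).congr (fun N => by norm_num [sub_eq_add_neg])
  have t4 : Tendsto (fun N : ℕ => (v₁ s ((-(N:ℤ)-1)+1)).2) atTop (nhds 0) :=
    (hp.comp (index_tendsto_atBot 0)).congr (fun N => by norm_num [show (-(N:ℤ)-1)+1 = -(N:ℤ)+0 by ring])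
  have := ((t1.mul t2).sub (t3.mul t4))
  simpa using this

/-- **Energy conservation** on an interval with uniformly bounded ℓ² norm. -/
lemma energy_conserved (sol : IsTodaSolution v₁) {a b M : ℝ}
    (hM : ∀ s ∈ Set.uIcc a b, (∑' n, nsq (v₁ s n)) ≤ M) :
    (∑' n, en (v₁ b n)) = (∑' n, en (v₁ a n)) := by
  set g : ℝ → ℤ → ℝ := fun s n => V' (v₁ s n).1 * (v₁ s (n+1)).2 with hg
  set bd : ℕ → ℝ → ℝ := fun N s => g s (N:ℤ) - g s (-(N:ℤ)-1) with hbd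
  set HN : ℕ → ℝ → ℝ := fun N s => ∑ n ∈ Finset.Icc (-(N:ℤ)) (N:ℤ), en (v₁ s n) with hHN
  -- derivative of partial sums
  have hderiv : ∀ N s, HasDerivAt (HN N) (bd N s) s := by
    intro N s
    have h1 : HasDerivAt (HN N) (∑ n ∈ Finset.Icc (-(N:ℤ)) (N:ℤ), (g s n - g s (n-1))) s := by
      apply HasDerivAt.fun_sum
      intro n _
      exact hasDerivAt_en_term sol s n
    rwa [tele (g s) N] at h1
  -- continuity of boundary terms
  have hcont : ∀ N, Continuous (bd N) := by
    intro N
    apply Continuous.sub <;>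
      exact (continuous_V'.comp (cont_coord1 sol _)).mul (cont_coord2 sol _)
  -- FTC
  have hFTC : ∀ N : ℕ, HN N b - HN N a = ∫ s in a..b, bd N s := by
    intro N
    exact (intervalIntegral.integral_eq_sub_of_hasDerivAt (fun s _ => hderiv N s)
      ((hcont N).intervalIntegrable a b)).symm
  -- bound on the boundary terms
  have hM0 : 0 ≤ M := le_trans (tsum_nonneg fun n => nsq_nonneg _) (hM a Set.left_mem_uIcc)
  set B := Real.sqrt M * Real.exp (Real.sqrt M) * Real.sqrt M with hB
  have hgbound : ∀ s ∈ Set.uIcc a b, ∀ n : ℤ, |g s n| ≤ B := by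
    intro s hs n
    have hQ := hM s hs
    have hr : |(v₁ s n).1| ≤ Real.sqrt M := by
      rw [← Real.sqrt_sq_eq_abs]
      exact Real.sqrt_le_sqrt (le_trans (coord1_sq_le (sol.mem s) n) hQ)
    have hp : |(v₁ s (n+1)).2| ≤ Real.sqrt M := by
      rw [← Real.sqrt_sq_eq_abs]
      exact Real.sqrt_le_sqrt (le_trans (coord2_sq_le (sol.mem s) (n+1)) hQ)
    have h1 : |V' (v₁ s n).1| ≤ Real.sqrt M * Real.exp (Real.sqrt M) := by
      refine le_trans (V'_abs_le _) ?_
      have h2 : Real.exp |(v₁ s n).1| ≤ Real.exp (Real.sqrt M) := Real.exp_le_exp.mpr hr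
      have := abs_nonneg (v₁ s n).1
      nlinarith [Real.exp_pos |(v₁ s n).1|]
    rw [hg]
    calc |V' (v₁ s n).1 * (v₁ s (n+1)).2| = |V' (v₁ s n).1| * |(v₁ s (n+1)).2| := abs_mul _ _
      _ ≤ (Real.sqrt M * Real.exp (Real.sqrt M)) * Real.sqrt M := by
          apply mul_le_mul h1 hp (abs_nonneg _)
          positivity
      _ = B := by rw [hB]
  -- dominated convergence
  have hlim : Tendsto (fun N => ∫ s in a..b, bd N s) atTop (nhds 0) := by
    have h0 : (0:ℝ) = ∫ s in a..b, (0:ℝ) := by simp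
    rw [h0]
    apply intervalIntegral.tendsto_integral_filter_of_dominated_convergence (fun _ => 2 * B)
    · exact Eventually.of_forall fun N => ((hcont N).aestronglyMeasurable)
    · apply Eventually.of_forall
      intro N
      apply ae_of_all
      intro s hs
      have hs' : s ∈ Set.uIcc a b := Set.uIoc_subset_uIcc hs
      rw [Real.norm_eq_abs, hbd]
      calc |g s (N:ℤ) - g s (-(N:ℤ)-1)| ≤ |g s (N:ℤ)| + |g s (-(N:ℤ)-1)| := abs_sub _ _
        _ ≤ B + B := add_le_add (hgbound s hs' _) (hgbound s hs' _)
        _ = 2 * B := by ring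
    · exact intervalIntegrable_const
    · apply ae_of_all
      intro s hs
      exact bd_tendsto_zero sol s
  -- put it together
  have h2 : Tendsto (fun N => HN N b - HN N a) atTop
      (nhds ((∑' n, en (v₁ b n)) - ∑' n, en (v₁ a n))) :=
    (HN_tendsto sol b).sub (HN_tendsto sol a)
  have h3 : Tendsto (fun N => HN N b - HN N a) atTop (nhds 0) := by
    simpa only [hFTC] using hlim
  have := tendsto_nhds_unique h2 h3
  linarith

/-- The ℓ² mass at time `s`. -/
def Qs (v₁ : ℝ → ℤ → ℝ × ℝ) (s : ℝ) : ℝ := ∑' n, nsq (v₁ s n)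
/-- The energy at time `s`. -/
def Es (v₁ : ℝ → ℤ → ℝ × ℝ) (s : ℝ) : ℝ := ∑' n, en (v₁ s n)
/-- Points near which the ℓ² mass is bounded. -/
def locBdd (v₁ : ℝ → ℤ → ℝ × ℝ) : Set ℝ :=
  {x | ∃ ε > 0, ∃ M, ∀ s ∈ Metric.ball x ε, Qs v₁ s ≤ M}


/-- the final bound as a function of the mass bound `c` -/
def KB (c : ℝ) : ℝ := (2 + 4 * Real.exp (rho (Real.exp (Real.sqrt c) * c))) * (Real.exp (Real.sqrt c) * c)


lemma isClosed_Qle (sol : IsTodaSolution v₁) (c : ℝ) : IsClosed {s : ℝ | Qs v₁ s ≤ c} := by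
  have heq : {s : ℝ | Qs v₁ s ≤ c}
      = ⋂ (F : Finset ℤ), {s : ℝ | (∑ n ∈ F, nsq (v₁ s n)) ≤ c} := by
    ext s
    simp only [Set.mem_setOf_eq, Set.mem_iInter]
    constructor
    · intro h F
      exact le_trans (Summable.sum_le_tsum F (fun n _ => nsq_nonneg _) (sol.mem s)) h
    · intro h
      exact Summable.tsum_le_of_sum_le (sol.mem s) h
  rw [heq]
  apply isClosed_iInter
  intro F
  apply isClosed_le _ continuous_const
  apply continuous_finset_sum
  intro n _
  have : Continuous fun s => (v₁ s n).1 ^ 2 + (v₁ s n).2 ^ 2 :=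
    ((cont_coord1 sol n).pow 2).add ((cont_coord2 sol n).pow 2)
  simpa [nsq] using this

lemma isOpen_locBdd : IsOpen (locBdd v₁) := by
  rw [Metric.isOpen_iff]
  rintro x ⟨ε, hε, M, hM⟩
  refine ⟨ε, hε, fun y hy => ?_⟩
  refine ⟨ε - dist y x, by simp [Metric.mem_ball] at hy; linarith, M, fun s hs => ?_⟩
  apply hM
  rw [Metric.mem_ball] at *
  have := dist_triangle s y x
  linarith

lemma bounded_on_uIcc (sol : IsTodaSolution v₁) {a b : ℝ} (hsub : Set.uIcc a b ⊆ locBdd v₁) :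
    ∃ M, ∀ s ∈ Set.uIcc a b, Qs v₁ s ≤ M := by
  have hc : ∀ x : ↥(Set.uIcc a b), ∃ ε > 0, ∃ M, ∀ s ∈ Metric.ball (x:ℝ) ε, Qs v₁ s ≤ M :=
    fun x => hsub x.2
  choose ε hε M hM using hc
  obtain ⟨t, ht⟩ := isCompact_uIcc.elim_finite_subcover
    (fun x : ↥(Set.uIcc a b) => Metric.ball (x:ℝ) (ε x)) (fun x => Metric.isOpen_ball)
    (fun s hs => Set.mem_iUnion.mpr ⟨⟨s, hs⟩, Metric.mem_ball_self (hε ⟨s, hs⟩)⟩)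
  refine ⟨((t.sup fun i => ⌈M i⌉₊ : ℕ) : ℝ), fun s hs => ?_⟩
  obtain ⟨i, hi, hsi⟩ := Set.mem_iUnion₂.mp (ht hs)
  calc Qs v₁ s ≤ M i := hM i s hsi
    _ ≤ (⌈M i⌉₊ : ℝ) := Nat.le_ceil _
    _ ≤ _ := Nat.cast_le.mpr (Finset.le_sup (f := fun i => ⌈M i⌉₊) hi)


lemma Qs_nonneg (s : ℝ) : 0 ≤ Qs v₁ s := tsum_nonneg fun n => nsq_nonneg _
lemma Es_nonneg (s : ℝ) : 0 ≤ Es v₁ s := tsum_nonneg fun n => en_nonneg _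

lemma energy_conserved' (sol : IsTodaSolution v₁) {a b M : ℝ}
    (hM : ∀ s ∈ Set.uIcc a b, Qs v₁ s ≤ M) : Es v₁ b = Es v₁ a :=
  energy_conserved sol hM

lemma conserved_of_locBdd (sol : IsTodaSolution v₁) {a b : ℝ}
    (hsub : Set.uIcc a b ⊆ locBdd v₁) : Es v₁ b = Es v₁ a := by
  obtain ⟨M, hM⟩ := bounded_on_uIcc sol hsub
  exact energy_conserved' sol hM

lemma energy_le' (sol : IsTodaSolution v₁) (s : ℝ) :
    Es v₁ s ≤ Real.exp (Real.sqrt (Qs v₁ s)) * Qs v₁ s := energy_le (sol.mem s)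

lemma Q_le_of_energy_le' (sol : IsTodaSolution v₁) (s : ℝ) {h : ℝ} (hh : 0 ≤ h)
    (hE : Es v₁ s ≤ h) : Qs v₁ s ≤ (2 + 4 * Real.exp (rho h)) * Es v₁ s :=
  Q_le_of_energy_le (sol.mem s) hh hE

lemma Es_le_of_Qs_le (sol : IsTodaSolution v₁) {s c : ℝ} (hc : 0 ≤ c) (h : Qs v₁ s ≤ c) :
    Es v₁ s ≤ Real.exp (Real.sqrt c) * c := by
  refine le_trans (energy_le' sol s) ?_
  have h1 : Real.sqrt (Qs v₁ s) ≤ Real.sqrt c := Real.sqrt_le_sqrt h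
  have h2 : Real.exp (Real.sqrt (Qs v₁ s)) ≤ Real.exp (Real.sqrt c) := Real.exp_le_exp.mpr h1
  have h3 := Qs_nonneg (v₁ := v₁) s
  nlinarith [Real.exp_pos (Real.sqrt (Qs v₁ s))]

lemma Qs_le_KB_of_Es_le (sol : IsTodaSolution v₁) {s c : ℝ} (hc : 0 ≤ c)
    (h : Es v₁ s ≤ Real.exp (Real.sqrt c) * c) : Qs v₁ s ≤ KB c := by
  have hh0 : (0:ℝ) ≤ Real.exp (Real.sqrt c) * c := by positivity
  have h4 := Q_le_of_energy_le' sol s (Es_nonneg _) le_rfl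
  have h5 : rho (Es v₁ s) ≤ rho (Real.exp (Real.sqrt c) * c) := rho_mono (Es_nonneg _) h
  have h6 := Real.exp_le_exp.mpr h5
  have h7 := Es_nonneg (v₁ := v₁) s
  simp only [KB]
  nlinarith [Real.exp_pos (rho (Es v₁ s))]

/-- Conservation across a single exceptional point `α`:  if the mass is bounded by `c` at `α`
and all other points of `uIcc α s` are locally bounded, then the mass at `s` is controlled. -/
lemma across (sol : IsTodaSolution v₁) {α s c : ℝ} (hc : 0 ≤ c) (hQα : Qs v₁ α ≤ c)
    (hnotK : ∀ σ ∈ Set.uIcc α s, σ ≠ α → σ ∈ locBdd v₁) :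
    Qs v₁ s ≤ max c (KB c) := by
  rcases eq_or_ne s α with rfl | hne
  · exact le_trans hQα (le_max_left _ _)
  -- interior points have constant energy
  have hsub : ∀ σ ∈ Set.uIcc α s, σ ≠ α → Set.uIcc σ s ⊆ {τ | τ ∈ Set.uIcc α s ∧ τ ≠ α} := by
    intro σ hσ hσne τ hτ
    rcases le_total α s with hle | hle
    · rw [Set.uIcc_of_le hle] at hσ ⊢
      have hσα : α < σ := lt_of_le_of_ne hσ.1 (Ne.symm hσne)
      rw [Set.uIcc_of_le hσ.2] at hτ
      exact ⟨⟨by linarith [hτ.1], hτ.2⟩, by intro h; rw [h] at hτ; linarith [hτ.1]⟩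
    · rw [Set.uIcc_of_ge hle] at hσ ⊢
      have hσα : σ < α := lt_of_le_of_ne hσ.2 hσne
      rw [Set.uIcc_of_ge hσ.1] at hτ
      exact ⟨⟨hτ.1, by linarith [hτ.2]⟩, by intro h; rw [h] at hτ; linarith [hτ.2]⟩
  have hEconst : ∀ σ ∈ Set.uIcc α s, σ ≠ α → Es v₁ σ = Es v₁ s := by
    intro σ hσ hσne
    apply (conserved_of_locBdd sol (a := σ) (b := s) ?_).symm
    intro τ hτ
    obtain ⟨hτ1, hτ2⟩ := hsub σ hσ hσne hτ
    exact hnotK τ hτ1 hτ2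
  -- uniform bound on uIcc α s
  have hMb : ∀ σ ∈ Set.uIcc α s,
      Qs v₁ σ ≤ max c ((2 + 4 * Real.exp (rho (Es v₁ s))) * Es v₁ s) := by
    intro σ hσ
    rcases eq_or_ne σ α with rfl | hσne
    · exact le_trans hQα (le_max_left _ _)
    · refine le_trans ?_ (le_max_right _ _)
      have hEσ := hEconst σ hσ hσne
      have h1 := Q_le_of_energy_le' sol σ (Es_nonneg (v₁ := v₁) s) (le_of_eq hEσ)
      rw [hEσ] at h1
      exact h1
  -- conservation across α
  have hEs : Es v₁ s = Es v₁ α := energy_conserved' sol (a := α) (b := s) hMb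
  have hEα : Es v₁ α ≤ Real.exp (Real.sqrt c) * c := Es_le_of_Qs_le sol hc hQα
  have := Qs_le_KB_of_Es_le sol hc (hEs ▸ hEα)
  exact le_trans this (le_max_right _ _)

/-- **Baire category argument**: the ℓ² mass is locally bounded everywhere. -/
lemma locBdd_univ (sol : IsTodaSolution v₁) (x : ℝ) : x ∈ locBdd v₁ := by
  by_contra hx₀
  set K : Set ℝ := (locBdd v₁)ᶜ with hK
  have hKne : K.Nonempty := ⟨x, hx₀⟩
  have hKclosed : IsClosed K := isOpen_locBdd.isClosed_compl
  haveI : CompleteSpace K := hKclosed.completeSpace_coe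
  haveI : Nonempty K := hKne.to_subtype
  have hcover : (⋃ k : ℕ, {y : K | Qs v₁ (y:ℝ) ≤ k}) = Set.univ := by
    ext y
    simp only [Set.mem_iUnion, Set.mem_setOf_eq, Set.mem_univ, iff_true]
    exact ⟨⌈Qs v₁ (y:ℝ)⌉₊, Nat.le_ceil _⟩
  have hclosed : ∀ k : ℕ, IsClosed {y : K | Qs v₁ (y:ℝ) ≤ k} :=
    fun k => (isClosed_Qle sol (k:ℝ)).preimage continuous_subtype_val
  obtain ⟨k, hk⟩ := nonempty_interior_of_iUnion_of_closed hclosed hcover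
  obtain ⟨y, hy⟩ := hk
  have hy' : {z : K | Qs v₁ (z:ℝ) ≤ k} ∈ nhds y := mem_interior_iff_mem_nhds.mp hy
  rw [nhds_induced] at hy'
  obtain ⟨U, hU, hUsub⟩ := Filter.mem_comap.mp hy'
  obtain ⟨ε, hε, hball⟩ := Metric.mem_nhds_iff.mp hU
  have hkey : ∀ s ∈ Metric.ball (y:ℝ) ε, s ∈ K → Qs v₁ s ≤ k := by
    intro s hs hsK
    exact hUsub (Set.mem_preimage.mpr (hball hs) : (⟨s, hsK⟩ : K) ∈ _)
  -- bound the mass on the whole ball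
  have hQb : ∀ s ∈ Metric.ball (y:ℝ) ε, Qs v₁ s ≤ max (k:ℝ) (KB k) := by
    intro s hs
    by_cases hsK : s ∈ K
    · exact le_trans (hkey s hs hsK) (le_max_left _ _)
    have hbsub : Set.uIcc ((y:ℝ)) s ⊆ Metric.ball ((y:ℝ)) ε := by
      rw [show Set.uIcc ((y:ℝ)) s = segment ℝ ((y:ℝ)) s from (segment_eq_uIcc _ _).symm]
      exact (convex_ball ((y:ℝ)) ε).segment_subset (Metric.mem_ball_self hε) hs
    rcases le_or_gt (y:ℝ) s with hys | hys
    · -- case y ≤ s : last bad point below s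
      have hTc : IsCompact (K ∩ Set.Icc (y:ℝ) s) := isCompact_Icc.inter_left hKclosed
      have hTne : (K ∩ Set.Icc (y:ℝ) s).Nonempty := ⟨(y:ℝ), y.2, Set.left_mem_Icc.mpr hys⟩
      obtain ⟨hαK, hαy, hαs⟩ : sSup (K ∩ Set.Icc (y:ℝ) s) ∈ K ∩ Set.Icc (y:ℝ) s :=
        hTc.sSup_mem hTne
      set α := sSup (K ∩ Set.Icc (y:ℝ) s) with hα
      have hnotK : ∀ σ ∈ Set.uIcc α s, σ ≠ α → σ ∈ locBdd v₁ := by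
        intro σ hσ hσne
        rw [Set.uIcc_of_le hαs] at hσ
        by_contra hσK
        have : σ ∈ K ∩ Set.Icc (y:ℝ) s := ⟨hσK, le_trans hαy hσ.1, hσ.2⟩
        have h1 : σ ≤ α := le_csSup hTc.bddAbove this
        exact hσne (le_antisymm h1 hσ.1)
      have hQα : Qs v₁ α ≤ k :=
        hkey α (hbsub (by rw [Set.uIcc_of_le hys]; exact ⟨hαy, hαs⟩)) hαK
      exact across sol (Nat.cast_nonneg k) hQα hnotK
    · -- case s < y : first bad point above s
      have hTc : IsCompact (K ∩ Set.Icc s (y:ℝ)) := isCompact_Icc.inter_left hKclosed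
      have hTne : (K ∩ Set.Icc s (y:ℝ)).Nonempty := ⟨(y:ℝ), y.2, Set.right_mem_Icc.mpr hys.le⟩
      obtain ⟨hαK, hαs, hαy⟩ : sInf (K ∩ Set.Icc s (y:ℝ)) ∈ K ∩ Set.Icc s (y:ℝ) :=
        hTc.sInf_mem hTne
      set α := sInf (K ∩ Set.Icc s (y:ℝ)) with hα
      have hnotK : ∀ σ ∈ Set.uIcc α s, σ ≠ α → σ ∈ locBdd v₁ := by
        intro σ hσ hσne
        rw [Set.uIcc_of_ge hαs] at hσ
        by_contra hσK
        have : σ ∈ K ∩ Set.Icc s (y:ℝ) := ⟨hσK, hσ.1, le_trans hσ.2 hαy⟩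
        have h1 : α ≤ σ := csInf_le hTc.bddBelow this
        exact hσne (le_antisymm hσ.2 h1)
      have hQα : Qs v₁ α ≤ k :=
        hkey α (hbsub (by rw [Set.uIcc_of_ge hys.le]; exact ⟨hαs, hαy⟩)) hαK
      exact across sol (Nat.cast_nonneg k) hQα hnotK
  exact y.2 ⟨ε, hε, max (k:ℝ) (KB k), hQb⟩

/-- Uniform `ℓ²` bound for Toda solutions, with a constant which is a
nondecreasing function of the size of the initial data. -/
theorem toda_uniform_l2_bound :
    ∀ R > (0:ℝ), ∃ C > (0:ℝ), ∀ v₁ : ℝ → ℤ → ℝ × ℝ, IsTodaSolution v₁ →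
      l2norm (v₁ 0) ≤ R → ∀ t : ℝ, l2norm (v₁ t) ≤ C * l2norm (v₁ 0) := by
  intro R hR
  set h₁ : ℝ := Real.exp R * R ^ 2 with hh₁
  set C : ℝ := Real.sqrt ((2 + 4 * Real.exp (rho h₁)) * Real.exp R) with hC
  have hCpos : 0 < C := Real.sqrt_pos.mpr (by positivity)
  refine ⟨C, hCpos, ?_⟩
  intro v₁ sol hinit t
  have hQ0 : 0 ≤ Qs v₁ 0 := Qs_nonneg 0
  have hl2 : l2norm (v₁ 0) = Real.sqrt (Qs v₁ 0) := rfl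
  have hl2t : l2norm (v₁ t) = Real.sqrt (Qs v₁ t) := rfl
  have hsq0 : Real.sqrt (Qs v₁ 0) ≤ R := hl2 ▸ hinit
  have hQ0R : Qs v₁ 0 ≤ R ^ 2 := by
    have := Real.sq_sqrt hQ0
    nlinarith [Real.sqrt_nonneg (Qs v₁ 0)]
  -- conservation of energy on [0, t]
  obtain ⟨M, hM⟩ := bounded_on_uIcc sol (a := 0) (b := t) (fun x _ => locBdd_univ sol x)
  have hEt : Es v₁ t = Es v₁ 0 := energy_conserved' sol hM
  -- bound on the initial energy
  have hE0 : Es v₁ 0 ≤ Real.exp R * Qs v₁ 0 := by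
    refine le_trans (energy_le' sol 0) ?_
    have h2 : Real.exp (Real.sqrt (Qs v₁ 0)) ≤ Real.exp R := Real.exp_le_exp.mpr hsq0
    nlinarith [Real.exp_pos (Real.sqrt (Qs v₁ 0))]
  have hE0h₁ : Es v₁ 0 ≤ h₁ := by
    refine le_trans hE0 ?_
    rw [hh₁]
    nlinarith [Real.exp_pos R]
  -- final bound
  have hQt : Qs v₁ t ≤ C ^ 2 * Qs v₁ 0 := by
    have h4 := Q_le_of_energy_le' sol t (by positivity) (hEt ▸ hE0h₁)
    have h5 : Es v₁ t ≤ Real.exp R * Qs v₁ 0 := hEt ▸ hE0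
    have h6 : C ^ 2 = (2 + 4 * Real.exp (rho h₁)) * Real.exp R := by
      rw [hC, Real.sq_sqrt (by positivity)]
    rw [h6]
    nlinarith [Real.exp_pos (rho h₁), Real.exp_pos R]
  rw [hl2t, hl2]
  calc Real.sqrt (Qs v₁ t) ≤ Real.sqrt (C ^ 2 * Qs v₁ 0) := Real.sqrt_le_sqrt hQt
    _ = C * Real.sqrt (Qs v₁ 0) := by
        rw [Real.sqrt_mul (by positivity), Real.sqrt_sq hCpos.le]

end

end TodaPaper
end

section
/- The Toda soliton profile yields an exact traveling-wave solution: For every c > 1, with κ = κ(c) the unique positive solution of sinh κ = cκ, the functions r̃_c and p̃_c satisfy for all x ∈ ℝ: −c r̃_c'(x) = p̃_c(x+1) − p̃_c(x) and −c p̃_c'(x) = V'(r̃_c(x)) − V'(r̃_c(x−1)), where V'(r) = 1 − e^{−r}. Consequently, for every x₀ ∈ ℝ the function u(t)(n) = (r̃_c(n − ct − x₀), p̃_c(n − ct − x₀)) solves the Toda lattice equations ∂_t r(t,n) = p(t,n+1) − p(t,n), ∂_t p(t,n) = V'(r(t,n)) − V'(r(t,n−1)). -/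
open Real Filter Set MeasureTheory

namespace TodaPaper

noncomputable section

/-- derivative of qt -/
def dq (c x : ℝ) : ℝ :=
  kappa c * Real.sinh (kappa c * (x - 1)) / Real.cosh (kappa c * (x - 1)) -
  kappa c * Real.sinh (kappa c * x) / Real.cosh (kappa c * x)

lemma hasDerivAt_affine (k b x : ℝ) : HasDerivAt (fun x : ℝ => k * (x - b)) k x := by
  simpa using ((hasDerivAt_id x).sub_const b).const_mul k

lemma hasDerivAt_log_cosh (k b x : ℝ) :
    HasDerivAt (fun x => Real.log (Real.cosh (k * (x - b))))
      (k * Real.sinh (k * (x - b)) / Real.cosh (k * (x - b))) x := by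
  have h2 := (Real.hasDerivAt_cosh (k * (x - b))).comp x (hasDerivAt_affine k b x)
  have h3 := h2.log (Real.cosh_pos (x := k * (x - b))).ne'
  convert h3 using 1
  all_goals try rfl
  simp only [Function.comp_apply]
  ring

lemma hasDerivAt_sinh_div_cosh (k b x : ℝ) :
    HasDerivAt (fun x => Real.sinh (k * (x - b)) / Real.cosh (k * (x - b)))
      (k / Real.cosh (k * (x - b)) ^ 2) x := by
  have hs := (Real.hasDerivAt_sinh (k * (x - b))).comp x (hasDerivAt_affine k b x)
  have hc := (Real.hasDerivAt_cosh (k * (x - b))).comp x (hasDerivAt_affine k b x)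
  have h := hs.div hc (Real.cosh_pos (x := k * (x - b))).ne'
  have key : Real.cosh (k * (x - b)) * k * Real.cosh (k * (x - b)) -
      Real.sinh (k * (x - b)) * (Real.sinh (k * (x - b)) * k) = k := by
    linear_combination k * (Real.cosh_sq_sub_sinh_sq (k * (x - b)))
  convert h using 1
  all_goals try rfl
  simp only [Function.comp_apply]
  rw [key]

lemma qt_eq (c x : ℝ) :
    qt c x = Real.log (Real.cosh (kappa c * (x - 1))) - Real.log (Real.cosh (kappa c * x)) :=
  Real.log_div (Real.cosh_pos _).ne' (Real.cosh_pos _).ne'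

lemma hasDerivAt_qt (c x : ℝ) : HasDerivAt (qt c) (dq c x) x := by
  have : qt c = fun x => Real.log (Real.cosh (kappa c * (x - 1))) -
      Real.log (Real.cosh (kappa c * x)) := funext fun x => qt_eq c x
  rw [this, dq]
  have h1 := hasDerivAt_log_cosh (kappa c) 1 x
  have h2 := hasDerivAt_log_cosh (kappa c) 0 x
  simp only [sub_zero] at h2
  exact h1.sub h2

lemma deriv_qt (c x : ℝ) : deriv (qt c) x = dq c x := (hasDerivAt_qt c x).deriv

lemma ptil_eq (c : ℝ) : ptil c = fun x => -c * dq c x := by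
  funext x; rw [ptil, deriv_qt]

lemma hasDerivAt_rtil (c x : ℝ) : HasDerivAt (rtil c) (dq c (x + 1) - dq c x) x := by
  have h1 : HasDerivAt (fun x => qt c (x + 1)) (dq c (x + 1)) x := by
    have := (hasDerivAt_qt c (x + 1)).comp x ((hasDerivAt_id x).add_const 1)
    simpa [Function.comp_def] using this
  exact h1.sub (hasDerivAt_qt c x)

/-- derivative of ptil -/
def dp (c x : ℝ) : ℝ :=
  -c * (kappa c ^ 2 / Real.cosh (kappa c * (x - 1)) ^ 2 -
        kappa c ^ 2 / Real.cosh (kappa c * x) ^ 2)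

lemma hasDerivAt_ptil (c x : ℝ) : HasDerivAt (ptil c) (dp c x) x := by
  rw [ptil_eq]
  have h1 := (hasDerivAt_sinh_div_cosh (kappa c) 1 x).const_mul (kappa c)
  have h2 := (hasDerivAt_sinh_div_cosh (kappa c) 0 x).const_mul (kappa c)
  simp only [sub_zero, ← mul_div_assoc] at h1 h2
  have H := (h1.sub h2).const_mul (-c)
  simp only [dq]
  convert H using 1
  all_goals try rfl
  rw [dp]; ring

lemma exp_qt (c x : ℝ) :
    Real.exp (qt c x) = Real.cosh (kappa c * (x - 1)) / Real.cosh (kappa c * x) := by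
  rw [qt, Real.exp_log (div_pos (Real.cosh_pos _) (Real.cosh_pos _))]

lemma cosh_prod (k a : ℝ) :
    Real.cosh (a - k) * Real.cosh (a + k) = Real.cosh a ^ 2 + Real.sinh k ^ 2 := by
  rw [Real.cosh_add, Real.cosh_sub]
  nlinarith [Real.cosh_sq_sub_sinh_sq a, Real.cosh_sq_sub_sinh_sq k]

lemma exp_neg_rtil (c x : ℝ) :
    Real.exp (-rtil c x) = 1 + Real.sinh (kappa c) ^ 2 / Real.cosh (kappa c * x) ^ 2 := by
  rw [rtil]
  rw [show -(qt c (x+1) - qt c x) = qt c x - qt c (x+1) by ring, Real.exp_sub, exp_qt, exp_qt]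
  have h1 : kappa c * (x + 1 - 1) = kappa c * x := by ring
  have h2 : kappa c * (x - 1) = kappa c * x - kappa c := by ring
  have h3 : kappa c * (x + 1) = kappa c * x + kappa c := by ring
  rw [h1, h2, h3]
  have hprod := cosh_prod (kappa c) (kappa c * x)
  have c1 := (Real.cosh_pos (kappa c * x)).ne'
  have c2 := (Real.cosh_pos (kappa c * x + kappa c)).ne'
  have c3 := (Real.cosh_pos (kappa c * x - kappa c)).ne'
  field_simp
  rw [h2, h3]
  linear_combination hprod



theorem kappa_exists (c : ℝ) (hc : 1 < c) : ∃ k : ℝ, 0 < k ∧ Real.sinh k = c * k := by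
  have hc0 : 0 < c := lt_trans one_pos hc
  set L := Real.log c with hL
  have hL0 : 0 < L := Real.log_pos hc
  -- sinh L < c * L
  have hcoshL : Real.cosh L < c := by
    rw [Real.cosh_eq, hL, Real.exp_log hc0, Real.exp_neg, Real.exp_log hc0]
    rw [div_lt_iff₀ (by norm_num)]
    have : c⁻¹ < c := by
      rw [inv_lt_iff_one_lt_mul₀ hc0]
      nlinarith
    nlinarith
  obtain ⟨ξ, hξ, hslope⟩ := exists_hasDerivAt_eq_slope Real.sinh Real.cosh hL0
    Real.continuous_sinh.continuousOn (fun x _ => Real.hasDerivAt_sinh x)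
  have hcξ : Real.cosh ξ < c := by
    refine lt_trans ?_ hcoshL
    rw [Real.cosh_lt_cosh, abs_of_pos hξ.1, abs_of_pos hL0]
    exact hξ.2
  have hlow : Real.sinh L < c * L := by
    rw [Real.sinh_zero] at hslope
    have : Real.sinh L = Real.cosh ξ * L := by
      field_simp at hslope
      rw [sub_zero, sub_zero, eq_div_iff hL0.ne'] at hslope
      linarith [hslope]
    rw [this]
    exact mul_lt_mul_of_pos_right hcξ hL0
  -- sinh (8c) > c * 8c
  have hK : c * (8 * c) < Real.sinh (8 * c) := by
    have h2 : (1 + 4 * c) ^ 2 ≤ Real.exp (8 * c) := by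
      have := Real.add_one_le_exp (4 * c)
      calc (1 + 4*c)^2 ≤ (Real.exp (4*c))^2 := by nlinarith [Real.exp_pos (4*c)]
        _ = Real.exp (8 * c) := by rw [sq, ← Real.exp_add]; ring_nf
    rw [Real.sinh_eq]
    have h3 : Real.exp (-(8*c)) ≤ 1 := Real.exp_le_one_iff.mpr (by nlinarith)
    nlinarith
  -- IVT
  have hLK : L < 8 * c := by
    have := Real.log_le_self hc0.le
    nlinarith
  have hcont : ContinuousOn (fun k => Real.sinh k - c * k) (Set.Icc L (8*c)) :=
    (Real.continuous_sinh.sub (continuous_const.mul continuous_id)).continuousOn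
  have h0mem : (0:ℝ) ∈ Set.Icc (Real.sinh L - c * L) (Real.sinh (8*c) - c * (8*c)) :=
    ⟨by linarith, by linarith⟩
  obtain ⟨k, hk, hfk⟩ := intermediate_value_Icc hLK.le hcont h0mem
  simp only at hfk
  exact ⟨k, lt_of_lt_of_le hL0 hk.1, by linarith⟩


lemma kappa_spec (c : ℝ) (hc : 1 < c) : 0 < kappa c ∧ Real.sinh (kappa c) = c * kappa c :=
  Classical.epsilon_spec (kappa_exists c hc)

lemma eq1 (c x : ℝ) : -c * deriv (rtil c) x = ptil c (x + 1) - ptil c x := by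
  rw [(hasDerivAt_rtil c x).deriv, ptil_eq]
  ring

lemma V'_rtil (c x : ℝ) (hc : 1 < c) :
    V' (rtil c x) = -(c * kappa c) ^ 2 / Real.cosh (kappa c * x) ^ 2 := by
  rw [V', exp_neg_rtil, (kappa_spec c hc).2]
  ring

lemma eq2 (c x : ℝ) (hc : 1 < c) :
    -c * deriv (ptil c) x = V' (rtil c x) - V' (rtil c (x - 1)) := by
  rw [(hasDerivAt_ptil c x).deriv, V'_rtil c x hc, V'_rtil c (x-1) hc, dp]
  have hs := (kappa_spec c hc).2
  have c1 := (Real.cosh_pos (kappa c * x)).ne'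
  have c2 := (Real.cosh_pos (kappa c * (x - 1))).ne'
  field_simp
  ring

/-- closed formula for ptil -/
lemma ptil_formula (c x : ℝ) :
    ptil c x = c * kappa c * Real.sinh (kappa c) /
      (Real.cosh (kappa c * (x - 1)) * Real.cosh (kappa c * x)) := by
  rw [ptil_eq]
  have key : Real.sinh (kappa c * x) * Real.cosh (kappa c * (x-1)) -
      Real.cosh (kappa c * x) * Real.sinh (kappa c * (x-1)) = Real.sinh (kappa c) := by
    rw [← Real.sinh_sub]; ring_nf
  have c1 := (Real.cosh_pos (kappa c * x)).ne'
  have c2 := (Real.cosh_pos (kappa c * (x - 1))).ne'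
  simp only [dq]
  field_simp
  linear_combination (c * kappa c) * key

lemma exp_abs_le_two_cosh (y : ℝ) : Real.exp |y| ≤ 2 * Real.cosh y := by
  rw [Real.cosh_eq]
  rcases abs_cases y with ⟨h, _⟩ | ⟨h, _⟩ <;> rw [h] <;>
    nlinarith [Real.exp_pos (-y), Real.exp_pos y]

lemma inv_cosh_le (k x : ℝ) (hk : 0 < k) :
    1 / Real.cosh (k * x) ≤ 2 * Real.exp (-(k * |x|)) := by
  have h := exp_abs_le_two_cosh (k * x)
  rw [abs_mul, abs_of_pos hk] at h
  rw [div_le_iff₀ (Real.cosh_pos _)]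
  calc (1:ℝ) = Real.exp (k * |x|) * Real.exp (-(k * |x|)) := by rw [← Real.exp_add]; simp
    _ ≤ 2 * Real.cosh (k * x) * Real.exp (-(k * |x|)) :=
        mul_le_mul_of_nonneg_right h (Real.exp_pos _).le
    _ = 2 * Real.exp (-(k * |x|)) * Real.cosh (k * x) := by ring


lemma rtil_eq_neg_log (c x : ℝ) :
    rtil c x = -Real.log (1 + Real.sinh (kappa c) ^ 2 / Real.cosh (kappa c * x) ^ 2) := by
  have h := exp_neg_rtil c x
  have := Real.log_exp (-rtil c x)
  rw [h] at this
  linarith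

lemma abs_rtil_le (c x : ℝ) (hκ : 0 < kappa c) :
    |rtil c x| ≤ 4 * Real.sinh (kappa c) ^ 2 * Real.exp (-(kappa c * |x|)) := by
  set s := Real.sinh (kappa c)
  set C := Real.cosh (kappa c * x) with hC
  have hC0 : 0 < C := Real.cosh_pos _
  set y := s ^ 2 / C ^ 2 with hy
  have hy0 : 0 ≤ y := by positivity
  rw [rtil_eq_neg_log, abs_neg, abs_of_nonneg (Real.log_nonneg (by linarith))]
  have hlog : Real.log (1 + y) ≤ y := by
    have := Real.log_le_sub_one_of_pos (show (0:ℝ) < 1 + y by linarith)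
    linarith
  refine hlog.trans ?_
  have hinv := inv_cosh_le (kappa c) x hκ
  have he0 : 0 < Real.exp (-(kappa c * |x|)) := Real.exp_pos _
  have he1 : Real.exp (-(kappa c * |x|)) ≤ 1 := Real.exp_le_one_iff.mpr (neg_nonpos.mpr (by positivity))
  have hsq : (1 / C) ^ 2 ≤ (2 * Real.exp (-(kappa c * |x|))) ^ 2 := by
    apply pow_le_pow_left₀ (by positivity) hinv
  have : y = s ^ 2 * (1 / C) ^ 2 := by rw [hy]; field_simp
  rw [this]
  nlinarith [sq_nonneg s, sq_nonneg (1 / C)]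

lemma ptil_pos_bound (c x : ℝ) (hc : 1 < c) :
    |ptil c x| ≤ 4 * (c * kappa c * Real.sinh (kappa c)) * Real.exp (-(kappa c * |x|)) := by
  obtain ⟨hκ, hs⟩ := kappa_spec c hc
  have hsp : 0 < Real.sinh (kappa c) := by rw [hs]; positivity
  have hc0 : (0:ℝ) < c := by linarith
  have hC1 : 0 < Real.cosh (kappa c * (x - 1)) := Real.cosh_pos _
  have hC2 : 0 < Real.cosh (kappa c * x) := Real.cosh_pos _
  have hb1 := inv_cosh_le (kappa c) (x - 1) hκ
  have hb2 := inv_cosh_le (kappa c) x hκ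
  have he1 : Real.exp (-(kappa c * |x - 1|)) ≤ 1 := Real.exp_le_one_iff.mpr (neg_nonpos.mpr (by positivity))
  have he1' : 0 < Real.exp (-(kappa c * |x - 1|)) := Real.exp_pos _
  have he2' : 0 < Real.exp (-(kappa c * |x|)) := Real.exp_pos _
  rw [ptil_formula, abs_of_pos (by positivity)]
  have hprod : (1 / Real.cosh (kappa c * (x - 1))) * (1 / Real.cosh (kappa c * x)) ≤
      (2 * Real.exp (-(kappa c * |x - 1|))) * (2 * Real.exp (-(kappa c * |x|))) :=
    mul_le_mul hb1 hb2 (by positivity) (by positivity)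
  have heq : c * kappa c * Real.sinh (kappa c) /
      (Real.cosh (kappa c * (x - 1)) * Real.cosh (kappa c * x)) =
      (c * kappa c * Real.sinh (kappa c)) *
      ((1 / Real.cosh (kappa c * (x - 1))) * (1 / Real.cosh (kappa c * x))) := by
    field_simp
  rw [heq]
  have hA : 0 < c * kappa c * Real.sinh (kappa c) := by positivity
  nlinarith [mul_le_mul_of_nonneg_left hprod hA.le,
    mul_le_mul_of_nonneg_left he1
      (by positivity : (0:ℝ) ≤ 4 * (c * kappa c * Real.sinh (kappa c)) *
        Real.exp (-(kappa c * |x|)))]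

lemma nsq_bound (c x : ℝ) (hc : 1 < c) :
    nsq (solProfile c x) ≤
      (16 * Real.sinh (kappa c) ^ 4 + 16 * (c * kappa c * Real.sinh (kappa c)) ^ 2) *
        Real.exp (-(kappa c * |x|)) := by
  obtain ⟨hκ, hs⟩ := kappa_spec c hc
  have hr := abs_rtil_le c x hκ
  have hp := ptil_pos_bound c x hc
  have he0 : 0 < Real.exp (-(kappa c * |x|)) := Real.exp_pos _
  have he1 : Real.exp (-(kappa c * |x|)) ≤ 1 := Real.exp_le_one_iff.mpr (neg_nonpos.mpr (by positivity))
  have h1 := mul_self_le_mul_self (abs_nonneg (rtil c x)) hr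
  have h2 := mul_self_le_mul_self (abs_nonneg (ptil c x)) hp
  rw [abs_mul_abs_self] at h1 h2
  rw [nsq, solProfile]
  simp only
  nlinarith [sq_nonneg (Real.sinh (kappa c)), sq_nonneg (c * kappa c * Real.sinh (kappa c))]

lemma summable_exp_abs (k : ℝ) (hk : 0 < k) :
    Summable fun n : ℤ => Real.exp (-(k * |(n : ℝ)|)) := by
  have key : ∀ n : ℕ, Real.exp (-(k * (n : ℝ))) = Real.exp (-k) ^ n := by
    intro n
    rw [← Real.exp_nat_mul]
    ring_nf
  have hg : Summable fun n : ℕ => Real.exp (-k) ^ n :=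
    summable_geometric_of_lt_one (Real.exp_pos _).le (Real.exp_lt_one_iff.mpr (by linarith))
  apply Summable.of_nat_of_neg
  · refine hg.congr fun n => ?_
    rw [← key]
    norm_num
  · refine hg.congr fun n => ?_
    rw [← key]
    push_cast
    rw [abs_neg, abs_of_nonneg (Nat.cast_nonneg n)]

lemma summable_sol (c : ℝ) (hc : 1 < c) (a : ℝ) :
    Summable fun n : ℤ => nsq (solProfile c ((n : ℝ) - a)) := by
  obtain ⟨hκ, hs⟩ := kappa_spec c hc
  set M := 16 * Real.sinh (kappa c) ^ 4 + 16 * (c * kappa c * Real.sinh (kappa c)) ^ 2 with hM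
  have hM0 : 0 ≤ M := by positivity
  apply Summable.of_nonneg_of_le (f := fun n : ℤ => (M * Real.exp (kappa c * |a|)) *
      Real.exp (-(kappa c * |(n : ℝ)|)))
  · intro n; rw [nsq]; positivity
  · intro n
    refine (nsq_bound c ((n:ℝ) - a) hc).trans ?_
    rw [mul_assoc M, ← Real.exp_add]
    apply mul_le_mul_of_nonneg_left _ hM0
    apply Real.exp_le_exp.mpr
    have habs : |(n:ℝ)| - |(n:ℝ) - a| ≤ |a| := by
      have := abs_sub_abs_le_abs_sub (n:ℝ) ((n:ℝ) - a)
      simp only [sub_sub_cancel] at this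
      linarith
    nlinarith
  · exact (summable_exp_abs (kappa c) hκ).mul_left _

/-- The Toda soliton profile yields an exact traveling-wave solution. -/
theorem toda_profile_traveling_wave (c : ℝ) (hc : 1 < c) :
    (∀ x : ℝ, -c * deriv (rtil c) x = ptil c (x + 1) - ptil c x ∧
      -c * deriv (ptil c) x = V' (rtil c x) - V' (rtil c (x - 1))) ∧
    ∀ x₀ : ℝ, IsTodaSolution (fun t n => solProfile c ((n : ℝ) - c * t - x₀)) := by
  refine ⟨fun x => ⟨eq1 c x, eq2 c x hc⟩, fun x₀ => ?_⟩
  constructor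
  · intro t
    have h := summable_sol c hc (c * t + x₀)
    unfold Meml2
    simpa [sub_sub] using h
  · intro t n
    have hg : HasDerivAt (fun s : ℝ => (n : ℝ) - c * s - x₀) (-c) t := by
      simpa using (((hasDerivAt_id t).const_mul c).const_sub ((n : ℝ))).sub_const x₀
    set x : ℝ := (n : ℝ) - c * t - x₀ with hx
    have hR' : HasDerivAt (fun s => rtil c ((n : ℝ) - c * s - x₀))
        ((dq c (x + 1) - dq c x) * (-c)) t := by
      have := (hasDerivAt_rtil c x).comp t hg; exact this
    simp only [solProfile]
    push_cast
    have harg : (n : ℝ) + 1 - c * t - x₀ = x + 1 := by rw [hx]; ring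
    rw [harg]
    convert hR' using 1
    rw [← eq1 c x, (hasDerivAt_rtil c x).deriv]
    ring
  · intro t n
    have hg : HasDerivAt (fun s : ℝ => (n : ℝ) - c * s - x₀) (-c) t := by
      simpa using (((hasDerivAt_id t).const_mul c).const_sub ((n : ℝ))).sub_const x₀
    set x : ℝ := (n : ℝ) - c * t - x₀ with hx
    have hP' : HasDerivAt (fun s => ptil c ((n : ℝ) - c * s - x₀))
        (dp c x * (-c)) t := by
      have := (hasDerivAt_ptil c x).comp t hg; exact this
    simp only [solProfile]
    push_cast
    have harg : (n : ℝ) - 1 - c * t - x₀ = x - 1 := by rw [hx]; ring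
    rw [harg]
    convert hP' using 1
    rw [← eq2 c x hc, (hasDerivAt_ptil c x).deriv]
    ring


end

end TodaPaper
end
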